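/- arXiv:2305.07035 — 2 statements merged into one kernel-verified Lean document; each statement's English description precedes it below -/
import Mathlib

section
/- Canonical mechanism nontermination: in the canonical clandestine game, for any state w, coalition C, and formula φ (serving as an operation), there exists a state u with (w,C,φ,u) ∈ M; in particular, if H_C φ ∈ hd(w) then the set {K_C φ} ∪ {ψ : K_{𝒜∖C} ψ ∈ hd(w)} is consistent. -/
/-- Formulas of the logic of clandestine operations: propositional variables,
falsum, negation, implication, distributed knowledge `know C φ` and
clandestine power `how C φ` for coalitions `C ⊆ Ag`. -/
inductive Formula (α : Type) (Ag : Type) : Type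
  | var  : α → Formula α Ag
  | bot  : Formula α Ag
  | neg  : Formula α Ag → Formula α Ag
  | imp  : Formula α Ag → Formula α Ag → Formula α Ag
  | know : Set Ag → Formula α Ag → Formula α Ag
  | how  : Set Ag → Formula α Ag → Formula α Ag

namespace Formula

/-- Defined disjunction. -/
def or {α Ag : Type} (φ ψ : Formula α Ag) : Formula α Ag := imp (neg φ) ψ

/-- Defined verum. -/
def top {α Ag : Type} : Formula α Ag := neg bot

/-- Boolean evaluation treating variables and modal formulas as atoms. -/
def eval {α Ag : Type} (v : Formula α Ag → Bool) : Formula α Ag → Bool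
  | var p => v (var p)
  | bot => false
  | neg φ => !(eval v φ)
  | imp φ ψ => !(eval v φ) || eval v ψ
  | know C φ => v (know C φ)
  | how C φ => v (how C φ)

end Formula

/-- A propositional tautology: true under every Boolean valuation of its
atoms (variables and modal subformulas). -/
def Tautology {α Ag : Type} (φ : Formula α Ag) : Prop :=
  ∀ v, φ.eval v = true

/-- Theorems of the logic of clandestine operations. -/
inductive Prov {α Ag : Type} : Formula α Ag → Prop
  | taut {φ} : Tautology φ → Prov φ
  | truth (C : Set Ag) (φ) : Prov (.imp (.know C φ) φ)
  | negIntro (C : Set Ag) (φ) :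
      Prov (.imp (.neg (.know C φ)) (.know C (.neg (.know C φ))))
  | distrib (C : Set Ag) (φ ψ) :
      Prov (.imp (.know C (.imp φ ψ)) (.imp (.know C φ) (.know C ψ)))
  | mono {C' C : Set Ag} (φ) : C' ⊆ C → Prov (.imp (.know C' φ) (.know C φ))
  | stratIntro (C : Set Ag) (φ) : Prov (.imp (.how C φ) (.know C (.how C φ)))
  | cia {C I A : Set Ag} (φ ψ) : C ∩ (I ∪ A) = ∅ →
      Prov (.imp
        (.know (C ∪ I) (.know (A ∪ I) (.imp (.know C φ) (.know (C ∪ I) ψ))))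
        (.imp (.how C φ) (.how (C ∪ I) ψ)))
  | nonterm (C : Set Ag) : Prov (.neg (.how C .bot))
  | emptyCoal (φ : Formula α Ag) : Prov (.neg (.how ∅ φ))
  | mp {φ ψ} : Prov (.imp φ ψ) → Prov φ → Prov ψ
  | necK (C : Set Ag) {φ} : Prov φ → Prov (.know C φ)
  | necH {C : Set Ag} {φ} : C ≠ ∅ → Prov φ → Prov (.how C φ)

/-- Derivability from a set of hypotheses `X`: from theorems of the system
and members of `X` using Modus Ponens only. -/
inductive ProvFrom {α Ag : Type} (X : Set (Formula α Ag)) : Formula α Ag → Prop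
  | hyp {φ} : φ ∈ X → ProvFrom X φ
  | thm {φ} : Prov φ → ProvFrom X φ
  | mp {φ ψ} : ProvFrom X (.imp φ ψ) → ProvFrom X φ → ProvFrom X ψ

/-- A set of formulas is consistent if falsum is not derivable from it. -/
def Consistent {α Ag : Type} (X : Set (Formula α Ag)) : Prop :=
  ¬ ProvFrom X .bot

/-- Maximal consistent set of formulas. -/
def MCS {α Ag : Type} (X : Set (Formula α Ag)) : Prop :=
  Consistent X ∧ ∀ φ : Formula α Ag, φ ∈ X ∨ .neg φ ∈ X

/-- Canonical states are lists of (coalition, maximal consistent set) steps,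
most recent step first, rooted at the fixed maximal consistent set `X₀`.
`hd X₀ w` is the maximal consistent set labelling the node `w`. -/
def hd {α Ag : Type} (X₀ : Set (Formula α Ag)) :
    List (Set Ag × Set (Formula α Ag)) → Set (Formula α Ag)
  | [] => X₀
  | (_, X) :: _ => X

/-- The canonical-state condition: every set along the path is maximal
consistent and contains everything known (to the edge coalition) at its
parent. -/
def IsCanState {α Ag : Type} (X₀ : Set (Formula α Ag)) :
    List (Set Ag × Set (Formula α Ag)) → Prop
  | [] => True
  | (C, X) :: w => IsCanState X₀ w ∧ MCS X ∧
      {φ : Formula α Ag | Formula.know C φ ∈ hd X₀ w} ⊆ X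

/-- Canonical indistinguishability for agent `a`: all edges on the simple
tree path between `w` and `w'` (through a common ancestor `v`) are labelled
with a coalition containing `a`. -/
def CSim {α Ag : Type} (a : Ag)
    (w w' : List (Set Ag × Set (Formula α Ag))) : Prop :=
  ∃ v, v <:+ w ∧ v <:+ w' ∧
    (∀ p ∈ w.take (w.length - v.length), a ∈ p.1) ∧
    (∀ p ∈ w'.take (w'.length - v.length), a ∈ p.1)

/-- Canonical coalition indistinguishability. -/
def CSimC {α Ag : Type} (C : Set Ag)
    (w w' : List (Set Ag × Set (Formula α Ag))) : Prop :=
  ∀ a ∈ C, CSim a w w'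

/-- The canonical mechanism: `(w, C, φ, u) ∈ M` iff `w ∼_{𝒜∖C} u` and
`H_C φ ∈ hd w` implies `K_C φ ∈ hd u`. -/
def CanM {α Ag : Type} (X₀ : Set (Formula α Ag))
    (w : List (Set Ag × Set (Formula α Ag))) (C : Set Ag) (φ : Formula α Ag)
    (u : List (Set Ag × Set (Formula α Ag))) : Prop :=
  CSimC Cᶜ w u ∧ (Formula.how C φ ∈ hd X₀ w → Formula.know C φ ∈ hd X₀ u)
section Aux

variable {α Ag : Type}

open Formula

lemma provFrom_mono {X Y : Set (Formula α Ag)} {φ} (h : ProvFrom X φ) (hXY : X ⊆ Y) :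
    ProvFrom Y φ := by
  induction h with
  | hyp h => exact .hyp (hXY h)
  | thm h => exact .thm h
  | mp _ _ ih1 ih2 => exact .mp ih1 ih2

lemma provFrom_compact {X : Set (Formula α Ag)} {φ} (h : ProvFrom X φ) :
    ∃ S, S ⊆ X ∧ S.Finite ∧ ProvFrom S φ := by
  induction h with
  | @hyp φ h => exact ⟨{φ}, by simpa, Set.finite_singleton _, .hyp rfl⟩
  | thm h => exact ⟨∅, by simp, Set.finite_empty, .thm h⟩
  | mp _ _ ih1 ih2 =>
    obtain ⟨S1, hS1, hf1, hp1⟩ := ih1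
    obtain ⟨S2, hS2, hf2, hp2⟩ := ih2
    exact ⟨S1 ∪ S2, Set.union_subset hS1 hS2, hf1.union hf2,
      .mp (provFrom_mono hp1 Set.subset_union_left)
        (provFrom_mono hp2 Set.subset_union_right)⟩

lemma prov_taut_mp {φ ψ : Formula α Ag} (h : Tautology (φ.imp ψ)) (hφ : Prov φ) : Prov ψ :=
  Prov.mp (Prov.taut h) hφ

lemma deduction {X : Set (Formula α Ag)} {φ ψ} (h : ProvFrom (insert φ X) ψ) :
    ProvFrom X (φ.imp ψ) := by
  induction h with
  | @hyp χ h =>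
    rcases h with h | h
    · subst h
      exact .thm (.taut (fun v => by simp [Formula.eval]))
    · exact .mp (.thm (.taut (fun v => by
        simp only [Formula.eval]
        cases χ.eval v <;> cases φ.eval v <;> rfl))) (.hyp h)
  | @thm χ h =>
    exact .mp (.thm (.taut (fun v => by
      simp only [Formula.eval]
      cases χ.eval v <;> cases φ.eval v <;> rfl))) (.thm h)
  | @mp χ ψ' _ _ ih1 ih2 =>
    refine .mp (.mp (.thm (.taut (fun v => ?_))) ih1) ih2
    simp only [Formula.eval]
    cases χ.eval v <;> cases ψ'.eval v <;> cases φ.eval v <;> rfl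

end Aux
section Aux2
variable {α Ag : Type}
open Formula

lemma mcs_closed {Y : Set (Formula α Ag)} (hY : MCS Y) {φ} (h : ProvFrom Y φ) : φ ∈ Y := by
  rcases hY.2 φ with hm | hm
  · exact hm
  · exfalso
    apply hY.1
    refine .mp (.mp (.thm (.taut (fun v => ?_))) (.hyp hm)) h
    simp only [Formula.eval]
    cases φ.eval v <;> rfl

lemma mcs_prov {Y : Set (Formula α Ag)} (hY : MCS Y) {φ} (h : Prov φ) : φ ∈ Y :=
  mcs_closed hY (.thm h)

lemma mcs_mp {Y : Set (Formula α Ag)} (hY : MCS Y) {φ ψ}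
    (h1 : Formula.imp φ ψ ∈ Y) (h2 : φ ∈ Y) : ψ ∈ Y :=
  mcs_closed hY (.mp (.hyp h1) (.hyp h2))

lemma know_provFrom {Y : Set (Formula α Ag)} (hY : MCS Y) (E : Set Ag) {χ}
    (h : ProvFrom {ψ : Formula α Ag | Formula.know E ψ ∈ Y} χ) : Formula.know E χ ∈ Y := by
  induction h with
  | hyp h => exact h
  | thm h => exact mcs_prov hY (.necK E h)
  | @mp φ ψ _ _ ih1 ih2 =>
    exact mcs_mp hY (mcs_mp hY (mcs_prov hY (.distrib E φ ψ)) ih1) ih2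

lemma prov_imp_trans {a b c : Formula α Ag} (h1 : Prov (a.imp b)) (h2 : Prov (b.imp c)) :
    Prov (a.imp c) := by
  refine .mp (.mp (.taut (fun v => ?_)) h1) h2
  simp only [Formula.eval]
  cases a.eval v <;> cases b.eval v <;> cases c.eval v <;> rfl

/-- positive introspection, derived from truth + negative introspection. -/
lemma prov4 (E : Set Ag) (θ : Formula α Ag) :
    Prov ((know E θ).imp (know E (know E θ))) := by
  -- step 1 : K θ → ¬K¬Kθ   (from truth : K¬Kθ → ¬Kθ)
  have t1 : Prov (Formula.imp (know E (neg (know E θ))) (neg (know E θ))) :=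
    .truth E (neg (know E θ))
  have s1 : Prov (Formula.imp (know E θ) (neg (know E (neg (know E θ))))) := by
    refine .mp (.taut (fun v => ?_)) t1
    simp only [Formula.eval]
    cases v (know E (neg (know E θ))) <;> cases v (know E θ) <;> rfl
  -- step 2 : ¬K¬Kθ → K¬K¬Kθ  (negIntro)
  have s2 : Prov (Formula.imp (neg (know E (neg (know E θ))))
      (know E (neg (know E (neg (know E θ)))))) := .negIntro E (neg (know E θ))
  -- step 3 : ¬Kθ → K¬Kθ, transformed: ¬K¬Kθ → Kθ, nec + distrib
  have t5 : Prov (Formula.imp (neg (know E θ)) (know E (neg (know E θ)))) := .negIntro E θ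
  have s3 : Prov (Formula.imp (neg (know E (neg (know E θ)))) (know E θ)) := by
    refine .mp (.taut (fun v => ?_)) t5
    simp only [Formula.eval]
    cases v (know E (neg (know E θ))) <;> cases v (know E θ) <;> rfl
  have s4 : Prov (Formula.imp (know E (neg (know E (neg (know E θ)))))
      (know E (know E θ))) :=
    .mp (.distrib E _ _) (.necK E s3)
  exact prov_imp_trans (prov_imp_trans s1 s2) s4

end Aux2
section Aux3
variable {α Ag : Type}
open Formula

/-- Key derived principle: `K_{𝒜∖C}(K_C φ → ⊥) → ¬H_C φ`. -/
lemma key_lemma (C : Set Ag) (φ : Formula α Ag) :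
    Prov ((know Cᶜ ((know C φ).imp Formula.bot)).imp (neg (how C φ))) := by
  set E : Set Ag := Cᶜ with hE
  set D : Set Ag := C ∪ Cᶜ with hD
  set θ : Formula α Ag := (know C φ).imp Formula.bot with hθ
  have s1 : Prov ((know E θ).imp (know E (know E θ))) := prov4 E θ
  have s2 : Prov ((know E (know E θ)).imp (know D (know E θ))) :=
    Prov.mono _ (by rw [hD, hE]; exact Set.subset_union_right)
  have t3 : Prov (θ.imp ((know C φ).imp (know D Formula.bot))) := by
    refine .taut (fun v => ?_)
    simp only [hθ, Formula.eval]
    cases v (know C φ) <;> cases v (know D Formula.bot) <;> rfl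
  have s3 : Prov ((know E θ).imp (know E ((know C φ).imp (know D Formula.bot)))) :=
    .mp (.distrib E _ _) (.necK E t3)
  have s4 : Prov ((know D (know E θ)).imp
      (know D (know E ((know C φ).imp (know D Formula.bot))))) :=
    .mp (.distrib D _ _) (.necK D s3)
  have s5 : Prov ((know D (know E ((know C φ).imp (know D Formula.bot)))).imp
      ((how C φ).imp (how D Formula.bot))) := by
    have h := Prov.cia (α := α) (C := C) (I := Cᶜ) (A := (∅ : Set Ag)) φ Formula.bot
      (by simp)
    rw [Set.empty_union] at h
    exact h
  have chain : Prov ((know E θ).imp ((how C φ).imp (how D Formula.bot))) :=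
    prov_imp_trans (prov_imp_trans (prov_imp_trans s1 s2) s4) s5
  have n : @Prov α Ag (neg (how D Formula.bot)) := .nonterm D
  refine .mp (.mp (.taut (fun v => ?_)) chain) n
  simp only [Formula.eval]
  cases v (know E θ) <;> cases v (how C φ) <;> cases v (how D Formula.bot) <;> rfl

/-- Lindenbaum's lemma via Zorn. -/
lemma lindenbaum {X : Set (Formula α Ag)} (h : Consistent X) :
    ∃ Y, X ⊆ Y ∧ MCS Y := by
  obtain ⟨Y, hXY, hmax⟩ := zorn_subset_nonempty
      {Z : Set (Formula α Ag) | X ⊆ Z ∧ Consistent Z}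
      (fun c hc hchain hne => by
        refine ⟨⋃₀ c, ⟨?_, ?_⟩, fun s hs => Set.subset_sUnion_of_mem hs⟩
        · obtain ⟨t, ht⟩ := hne
          exact (hc ht).1.trans (Set.subset_sUnion_of_mem ht)
        · intro hbot
          obtain ⟨S, hSsub, hSfin, hSp⟩ := provFrom_compact hbot
          have key : ∀ S : Set (Formula α Ag), S.Finite → S ⊆ ⋃₀ c →
              ∃ t ∈ c, S ⊆ t := by
            intro S hSfin
            refine Set.Finite.induction_on
              (motive := fun S _ => S ⊆ ⋃₀ c → ∃ t ∈ c, S ⊆ t) S hSfin (fun _ => ?_) ?_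
            · obtain ⟨t, ht⟩ := hne
              exact ⟨t, ht, by simp⟩
            · intro a S ha hSfin ih hsub
              obtain ⟨t₁, ht₁, hat₁⟩ := hsub (Set.mem_insert a S)
              obtain ⟨t₂, ht₂, hSt₂⟩ := ih (fun x hx => hsub (Set.mem_insert_of_mem _ hx))
              rcases hchain.total ht₁ ht₂ with hle | hle
              · exact ⟨t₂, ht₂, Set.insert_subset (hle hat₁) hSt₂⟩
              · exact ⟨t₁, ht₁, Set.insert_subset hat₁ (hSt₂.trans hle)⟩
          obtain ⟨t, htc, hSt⟩ := key S hSfin hSsub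
          exact (hc htc).2 (provFrom_mono hSp hSt))
      X ⟨subset_rfl, h⟩
  have hYS : X ⊆ Y ∧ Consistent Y := hmax.prop
  refine ⟨Y, hXY, hYS.2, fun φ => ?_⟩
  by_cases hφ : φ ∈ Y
  · exact Or.inl hφ
  · right
    have hcons : Consistent (insert (Formula.neg φ) Y) := by
      intro hbot1
      have h2 : ProvFrom Y ((Formula.neg φ).imp Formula.bot) := deduction hbot1
      have hφc : ¬ Consistent (insert φ Y) := by
        intro hφc
        exact hφ ((hmax.2 ⟨hYS.1.trans (Set.subset_insert _ _), hφc⟩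
          (Set.subset_insert _ _)) (Set.mem_insert _ _))
      have h1 : ProvFrom Y (φ.imp Formula.bot) := deduction (not_not.mp hφc)
      apply hYS.2
      refine .mp (.mp (.thm (.taut (fun v => ?_))) h1) h2
      simp only [Formula.eval]
      cases φ.eval v <;> rfl
    exact (hmax.2 ⟨hYS.1.trans (Set.subset_insert _ _), hcons⟩
      (Set.subset_insert _ _)) (Set.mem_insert _ _)

end Aux3


/-- Canonical mechanism nontermination: for any canonical state `w`, coalition
`C`, and formula `φ`, there is a canonical state `u` with `(w,C,φ,u) ∈ M`;
moreover, if `H_C φ ∈ hd w` then `{K_C φ} ∪ {ψ : K_{𝒜∖C} ψ ∈ hd w}` is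
consistent. -/
theorem canonical_nontermination {α Ag : Type} {X₀ : Set (Formula α Ag)}
    (hX₀ : MCS X₀) {w : List (Set Ag × Set (Formula α Ag))}
    (hw : IsCanState X₀ w) (C : Set Ag) (φ : Formula α Ag) :
    (∃ u, IsCanState X₀ u ∧ CanM X₀ w C φ u) ∧
    (Formula.how C φ ∈ hd X₀ w →
      Consistent ({Formula.know C φ} ∪
        {ψ | Formula.know Cᶜ ψ ∈ hd X₀ w})) := by
  have hhd : MCS (hd X₀ w) := by
    cases w with
    | nil => exact hX₀
    | cons p w => exact hw.2.1
  have hcons : Formula.how C φ ∈ hd X₀ w →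
      Consistent ({Formula.know C φ} ∪ {ψ | Formula.know Cᶜ ψ ∈ hd X₀ w}) := by
    intro hH hbot
    rw [Set.singleton_union] at hbot
    have h1 : ProvFrom {ψ | Formula.know Cᶜ ψ ∈ hd X₀ w}
        ((Formula.know C φ).imp .bot) := deduction hbot
    have h2 : Formula.know Cᶜ ((Formula.know C φ).imp .bot) ∈ hd X₀ w :=
      know_provFrom hhd Cᶜ h1
    have h3 : Formula.neg (Formula.how C φ) ∈ hd X₀ w :=
      mcs_mp hhd (mcs_prov hhd (key_lemma C φ)) h2
    apply hhd.1
    refine .mp (.mp (.thm (.taut (fun v => ?_))) (.hyp h3)) (.hyp hH)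
    simp only [Formula.eval]
    cases v (Formula.how C φ) <;> rfl
  refine ⟨?_, hcons⟩
  by_cases hH : Formula.how C φ ∈ hd X₀ w
  · obtain ⟨Y, hSY, hYmcs⟩ := lindenbaum (hcons hH)
    refine ⟨(Cᶜ, Y) :: w,
      ⟨hw, hYmcs, fun ψ hψ => hSY (Set.mem_union_right _ hψ)⟩,
      ?_, fun _ => hSY (Set.mem_union_left _ rfl)⟩
    intro a ha
    refine ⟨w, List.suffix_refl w, List.suffix_cons _ _, by simp, ?_⟩
    intro p hp
    have hlen : ((Cᶜ, Y) :: w).length - w.length = 1 := by simp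
    rw [hlen] at hp
    simp only [List.take_succ_cons, List.take_zero, List.mem_singleton] at hp
    subst hp
    exact ha
  · exact ⟨w, hw, fun a ha =>
      ⟨w, List.suffix_refl w, List.suffix_refl w, by simp, by simp⟩,
      fun h => absurd h hH⟩
end

section
/- Canonical model H-truth lemma (positive direction): if H_C φ ∈ hd(w) then for any three canonical states w', u, u', the conditions w ∼_C w', (w',C,φ,u) ∈ M, and u ∼_C u' imply φ ∈ hd(u'). -/
section Aux

variable {α Ag : Type}

/-- Transitivity of provable implication. -/
lemma prov_imp_trans_s16 {φ ψ χ : Formula α Ag} (h1 : Prov (φ.imp ψ))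
    (h2 : Prov (ψ.imp χ)) : Prov (φ.imp χ) := by
  have t : Prov ((φ.imp ψ).imp ((ψ.imp χ).imp (φ.imp χ))) := by
    apply Prov.taut
    intro v
    simp only [Formula.eval]
    cases Formula.eval v φ <;> cases Formula.eval v ψ <;> cases Formula.eval v χ <;> rfl
  exact (t.mp h1).mp h2

/-- Contraposition. -/
lemma prov_contra {φ ψ : Formula α Ag} (h : Prov (φ.imp ψ)) :
    Prov (ψ.neg.imp φ.neg) := by
  have t : Prov ((φ.imp ψ).imp (ψ.neg.imp φ.neg)) := by
    apply Prov.taut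
    intro v
    simp only [Formula.eval]
    cases Formula.eval v φ <;> cases Formula.eval v ψ <;> rfl
  exact t.mp h

lemma prov_dni (φ : Formula α Ag) : Prov (φ.imp φ.neg.neg) := by
  apply Prov.taut; intro v; simp only [Formula.eval]
  cases Formula.eval v φ <;> rfl

lemma prov_dne (φ : Formula α Ag) : Prov (φ.neg.neg.imp φ) := by
  apply Prov.taut; intro v; simp only [Formula.eval]
  cases Formula.eval v φ <;> rfl

/-- Positive introspection, derived from truth and negative introspection. -/
lemma prov_pos_intro (C : Set Ag) (ψ : Formula α Ag) :
    Prov ((Formula.know C ψ).imp (Formula.know C (Formula.know C ψ))) := by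
  set K := Formula.know C ψ with hK
  -- Step a: K → ¬K¬K
  have a1 : Prov ((Formula.know C K.neg).imp K.neg) := Prov.truth C K.neg
  have a2 : Prov (K.neg.neg.imp (Formula.know C K.neg).neg) := prov_contra a1
  have a : Prov (K.imp (Formula.know C K.neg).neg) :=
    prov_imp_trans_s16 (prov_dni K) a2
  -- Step b: ¬K¬K → K¬K¬K  (negIntro with φ := K.neg)
  have b : Prov ((Formula.know C K.neg).neg.imp
      (Formula.know C (Formula.know C K.neg).neg)) := Prov.negIntro C K.neg
  have c : Prov (K.imp (Formula.know C (Formula.know C K.neg).neg)) :=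
    prov_imp_trans_s16 a b
  -- Step d: ⊢ ¬K¬K → K (contrapositive of negIntro + dne), then necessitate.
  have d1 : Prov (K.neg.imp (Formula.know C K.neg)) := Prov.negIntro C ψ
  have d2 : Prov ((Formula.know C K.neg).neg.imp K.neg.neg) := prov_contra d1
  have d3 : Prov ((Formula.know C K.neg).neg.imp K) := prov_imp_trans_s16 d2 (prov_dne K)
  have d4 : Prov (Formula.know C ((Formula.know C K.neg).neg.imp K)) := Prov.necK C d3
  have d5 : Prov ((Formula.know C (Formula.know C K.neg).neg).imp (Formula.know C K)) :=
    (Prov.distrib C _ _).mp d4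
  exact prov_imp_trans_s16 c d5

/-- An MCS is closed under provable implication. -/
lemma mcs_closed_s16 {X : Set (Formula α Ag)} (hX : MCS X) {φ ψ : Formula α Ag}
    (h : Prov (φ.imp ψ)) (hφ : φ ∈ X) : ψ ∈ X := by
  rcases hX.2 ψ with hψ | hψ
  · exact hψ
  · exfalso
    apply hX.1
    have t : Prov (ψ.imp (ψ.neg.imp Formula.bot)) := by
      apply Prov.taut; intro v; simp only [Formula.eval]
      cases Formula.eval v ψ <;> rfl
    have hXψ : ProvFrom X ψ := (ProvFrom.thm h).mp (ProvFrom.hyp hφ)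
    exact ((ProvFrom.thm t).mp hXψ).mp (ProvFrom.hyp hψ)

/-- An MCS does not contain both a formula and its negation. -/
lemma mcs_not_both {X : Set (Formula α Ag)} (hX : MCS X) {φ : Formula α Ag}
    (h1 : φ ∈ X) (h2 : φ.neg ∈ X) : False := by
  apply hX.1
  have t : Prov (φ.imp (φ.neg.imp Formula.bot)) := by
    apply Prov.taut; intro v; simp only [Formula.eval]
    cases Formula.eval v φ <;> rfl
  exact ((ProvFrom.thm t).mp (ProvFrom.hyp h1)).mp (ProvFrom.hyp h2)

/-- Suffixes of canonical states are canonical states. -/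
lemma isCanState_suffix {X₀ : Set (Formula α Ag)}
    {w r : List (Set Ag × Set (Formula α Ag))} (h : r <:+ w)
    (hw : IsCanState X₀ w) : IsCanState X₀ r := by
  obtain ⟨l, rfl⟩ := h
  induction l with
  | nil => exact hw
  | cons p l ih => exact ih hw.1

/-- The head of a canonical state is an MCS. -/
lemma hd_mcs {X₀ : Set (Formula α Ag)} (hX₀ : MCS X₀)
    {w : List (Set Ag × Set (Formula α Ag))} (hw : IsCanState X₀ w) :
    MCS (hd X₀ w) := by
  cases w with
  | nil => exact hX₀
  | cons p l => exact hw.2.1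

/-- Knowledge travels down edges whose labels contain `C`. -/
lemma know_down {X₀ : Set (Formula α Ag)} (hX₀ : MCS X₀) {C : Set Ag}
    {ψ : Formula α Ag} :
    ∀ (l r : List (Set Ag × Set (Formula α Ag))), IsCanState X₀ (l ++ r) →
      (∀ p ∈ l, C ⊆ p.1) → Formula.know C ψ ∈ hd X₀ r →
      Formula.know C ψ ∈ hd X₀ (l ++ r) := by
  intro l
  induction l with
  | nil => intro r _ _ h; exact h
  | cons q l ih =>
    intro r hcan hlab h
    obtain ⟨D, X⟩ := q
    have h1 : Formula.know C ψ ∈ hd X₀ (l ++ r) :=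
      ih r hcan.1 (fun p hp => hlab p (List.mem_cons_of_mem _ hp)) h
    have hm : MCS (hd X₀ (l ++ r)) := hd_mcs hX₀ hcan.1
    have h2 : Formula.know C (Formula.know C ψ) ∈ hd X₀ (l ++ r) :=
      mcs_closed_s16 hm (prov_pos_intro C ψ) h1
    have hCD : C ⊆ D := hlab (D, X) List.mem_cons_self
    have h3 : Formula.know D (Formula.know C ψ) ∈ hd X₀ (l ++ r) :=
      mcs_closed_s16 hm (Prov.mono (Formula.know C ψ) hCD) h2
    exact hcan.2.2 h3

/-- Knowledge travels up edges whose labels contain `C`. -/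
lemma know_up {X₀ : Set (Formula α Ag)} (hX₀ : MCS X₀) {C : Set Ag}
    {ψ : Formula α Ag} :
    ∀ (l r : List (Set Ag × Set (Formula α Ag))), IsCanState X₀ (l ++ r) →
      (∀ p ∈ l, C ⊆ p.1) → Formula.know C ψ ∈ hd X₀ (l ++ r) →
      Formula.know C ψ ∈ hd X₀ r := by
  intro l
  induction l with
  | nil => intro r _ _ h; exact h
  | cons q l ih =>
    intro r hcan hlab h
    obtain ⟨D, X⟩ := q
    have hm : MCS (hd X₀ (l ++ r)) := hd_mcs hX₀ hcan.1
    have hX : MCS X := hcan.2.1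
    have h1 : Formula.know C ψ ∈ hd X₀ (l ++ r) := by
      rcases hm.2 (Formula.know C ψ) with hin | hneg
      · exact hin
      · exfalso
        have h2 : Formula.know C (Formula.know C ψ).neg ∈ hd X₀ (l ++ r) :=
          mcs_closed_s16 hm (Prov.negIntro C ψ) hneg
        have hCD : C ⊆ D := hlab (D, X) List.mem_cons_self
        have h3 : Formula.know D (Formula.know C ψ).neg ∈ hd X₀ (l ++ r) :=
          mcs_closed_s16 hm (Prov.mono (Formula.know C ψ).neg hCD) h2
        have h4 : (Formula.know C ψ).neg ∈ X := hcan.2.2 h3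
        exact mcs_not_both hX h h4
    exact ih r hcan.1 (fun p hp => hlab p (List.mem_cons_of_mem _ hp)) h1

/-- Knowledge transport along canonical coalition indistinguishability. -/
lemma know_transport {X₀ : Set (Formula α Ag)} (hX₀ : MCS X₀) {C : Set Ag}
    {ψ : Formula α Ag} {v v' : List (Set Ag × Set (Formula α Ag))}
    (hv : IsCanState X₀ v) (hv' : IsCanState X₀ v') (hsim : CSimC C v v')
    (hK : Formula.know C ψ ∈ hd X₀ v) : Formula.know C ψ ∈ hd X₀ v' := by
  classical
  set P : ℕ → Prop := fun n =>
    ∃ r : List (Set Ag × Set (Formula α Ag)), r.length = n ∧ r <:+ v ∧ r <:+ v' with hP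
  have hP0 : P 0 := ⟨[], rfl, List.nil_suffix, List.nil_suffix⟩
  obtain ⟨L, hLlen, hLv, hLv'⟩ :
      P (Nat.findGreatest P v.length) :=
    Nat.findGreatest_spec (Nat.zero_le _) hP0
  have hmax : ∀ r : List (Set Ag × Set (Formula α Ag)),
      r <:+ v → r <:+ v' → r.length ≤ L.length := by
    intro r h1 h2
    rw [hLlen]
    exact Nat.le_findGreatest h1.length_le ⟨r, rfl, h1, h2⟩
  -- edge labels on the path from v (resp. v') down to L all contain C
  have hedge : ∀ (x : List (Set Ag × Set (Formula α Ag))),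
      (∀ a ∈ C, ∃ r, r <:+ v ∧ r <:+ v' ∧
        ∀ p ∈ x.take (x.length - r.length), a ∈ p.1) →
      ∀ p ∈ x.take (x.length - L.length), C ⊆ p.1 := by
    intro x hx p hp a ha
    obtain ⟨r, hr1, hr2, hr3⟩ := hx a ha
    have hrL : r.length ≤ L.length := hmax r hr1 hr2
    have hsub : x.take (x.length - L.length) <+: x.take (x.length - r.length) := by
      have : x.take (x.length - L.length)
          = (x.take (x.length - r.length)).take (x.length - L.length) := by
        rw [List.take_take, min_eq_left (Nat.sub_le_sub_left hrL _)]
      rw [this]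
      exact List.take_prefix _ _
    exact hr3 p (hsub.subset hp)
  have hedgev : ∀ p ∈ v.take (v.length - L.length), C ⊆ p.1 := by
    apply hedge
    intro a ha
    obtain ⟨r, h1, h2, h3, _⟩ := hsim a ha
    exact ⟨r, h1, h2, h3⟩
  have hedgev' : ∀ p ∈ v'.take (v'.length - L.length), C ⊆ p.1 := by
    apply hedge
    intro a ha
    obtain ⟨r, h1, h2, _, h4⟩ := hsim a ha
    exact ⟨r, h1, h2, h4⟩
  obtain ⟨l, rfl⟩ := hLv
  obtain ⟨l', rfl⟩ := hLv'
  have hlenl : (l ++ L).length - L.length = l.length := by simp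
  have hlenl' : (l' ++ L).length - L.length = l'.length := by simp
  rw [hlenl, List.take_left] at hedgev
  rw [hlenl', List.take_left] at hedgev'
  have hmid : Formula.know C ψ ∈ hd X₀ L := know_up hX₀ l L hv hedgev hK
  exact know_down hX₀ l' L hv' hedgev' hmid

end Aux

/-- Canonical H-truth lemma (positive direction): if `H_C φ ∈ hd w`,
`w ∼_C w'`, `(w',C,φ,u) ∈ M`, and `u ∼_C u'`, then `φ ∈ hd u'`. -/
theorem how_all {α Ag : Type} {X₀ : Set (Formula α Ag)} (hX₀ : MCS X₀)
    {w w' u u' : List (Set Ag × Set (Formula α Ag))} {C : Set Ag}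
    {φ : Formula α Ag}
    (hw : IsCanState X₀ w) (hw' : IsCanState X₀ w')
    (hu : IsCanState X₀ u) (hu' : IsCanState X₀ u')
    (h : Formula.how C φ ∈ hd X₀ w)
    (h1 : CSimC C w w') (h2 : CanM X₀ w' C φ u) (h3 : CSimC C u u') :
    φ ∈ hd X₀ u' := by
  have hmw : MCS (hd X₀ w) := hd_mcs hX₀ hw
  have hmu' : MCS (hd X₀ u') := hd_mcs hX₀ hu'
  -- Strategic introspection: K_C H_C φ ∈ hd w
  have hK : Formula.know C (Formula.how C φ) ∈ hd X₀ w :=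
    mcs_closed_s16 hmw (Prov.stratIntro C φ) h
  -- transport along w ∼_C w'
  have hKw' : Formula.know C (Formula.how C φ) ∈ hd X₀ w' :=
    know_transport hX₀ hw hw' h1 hK
  have hHw' : Formula.how C φ ∈ hd X₀ w' :=
    mcs_closed_s16 (hd_mcs hX₀ hw') (Prov.truth C (Formula.how C φ)) hKw'
  -- the mechanism yields K_C φ at u
  have hKu : Formula.know C φ ∈ hd X₀ u := h2.2 hHw'
  -- transport along u ∼_C u'
  have hKu' : Formula.know C φ ∈ hd X₀ u' :=
    know_transport hX₀ hu hu' h3 hKu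
  exact mcs_closed_s16 hmu' (Prov.truth C φ) hKu'
end
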